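/- Let G = (V,E) be a finite simple graph on V = {1,…,n} with n ≥ 1. Then the stability number α(G) equals the supremum of ⟨J_{n×n}, X⟩ over all X with X ∈ CTH²(G) and X ∈ STAB²(G), where J_{n×n} is the n×n all-ones matrix; moreover this supremum is attained. -/

import Mathlib

open Matrix

noncomputable section

/-- A stable set vector of a graph `G`: a 0/1 vector with `s i * s j = 0` on edges. -/
def IsStableVec {V : Type*} (G : SimpleGraph V) (s : V → ℝ) : Prop :=
  (∀ i, s i = 0 ∨ s i = 1) ∧ ∀ i j, G.Adj i j → s i * s j = 0

/-- The squared stable set polytope `STAB²(G) = conv{ s sᵀ : s ∈ S(G) }`. -/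
def stab2 {V : Type*} (G : SimpleGraph V) : Set (Matrix V V ℝ) :=
  convexHull ℝ { M | ∃ s, IsStableVec G s ∧ M = Matrix.vecMulVec s s }

/-- The scaled squared stable set polytope
`SSTAB²(G) = conv({ (1/(sᵀs)) s sᵀ : s ∈ S(G), s ≠ 0 } ∪ {0})`. -/
def sstab2 {V : Type*} [Fintype V] (G : SimpleGraph V) : Set (Matrix V V ℝ) :=
  convexHull ℝ
    ({ M | ∃ s, IsStableVec G s ∧ s ≠ 0 ∧
        M = (∑ k, s k * s k)⁻¹ • Matrix.vecMulVec s s } ∪ {(0 : Matrix V V ℝ)})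

/-- The feasible region `TH²(G)` of the SDP (Tn+1): pairs `(x, X)` with `X` symmetric,
`diag X = x`, `X i j = 0` on edges and `X - x xᵀ` positive semidefinite. -/
def th2 {n : ℕ} (G : SimpleGraph (Fin n)) :
    Set ((Fin n → ℝ) × Matrix (Fin n) (Fin n) ℝ) :=
  { p | p.2.IsSymm ∧ (∀ i, p.2 i i = p.1 i) ∧
      (∀ i j, G.Adj i j → p.2 i j = 0) ∧ (p.2 - Matrix.vecMulVec p.1 p.1).PosSemidef }

/-- The feasible region `CTH²(G)` of the SDP (Tn): symmetric PSD matrices with trace 1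
vanishing on edges. -/
def cth2 {n : ℕ} (G : SimpleGraph (Fin n)) : Set (Matrix (Fin n) (Fin n) ℝ) :=
  { X | X.IsSymm ∧ X.trace = 1 ∧ (∀ i j, G.Adj i j → X i j = 0) ∧ X.PosSemidef }

/-- The principal submatrix `X_I` of `X` indexed by `I`. -/
def subMat {n : ℕ} (X : Matrix (Fin n) (Fin n) ℝ) (I : Finset (Fin n)) :
    Matrix (I : Set (Fin n)) (I : Set (Fin n)) ℝ :=
  X.submatrix Subtype.val Subtype.val

/-- The exact subgraph constraint (ESC) for the subgraph of `G` induced by `I`. -/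
def escFeas {n : ℕ} (G : SimpleGraph (Fin n)) (X : Matrix (Fin n) (Fin n) ℝ)
    (I : Finset (Fin n)) : Prop :=
  subMat X I ∈ stab2 (G.induce (I : Set (Fin n)))

/-- The scaled exact subgraph constraint (SESC) for the subgraph of `G` induced by `I`. -/
def sescFeas {n : ℕ} (G : SimpleGraph (Fin n)) (X : Matrix (Fin n) (Fin n) ℝ)
    (I : Finset (Fin n)) : Prop :=
  subMat X I ∈ sstab2 (G.induce (I : Set (Fin n)))

/-- `z^E_J(G)`: optimal value of (Tn+1) with the ESCs for all `I ∈ J`. -/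
def zE {n : ℕ} (G : SimpleGraph (Fin n)) (J : Set (Finset (Fin n))) : ℝ :=
  sSup { r | ∃ x X, (x, X) ∈ th2 G ∧ (∀ I ∈ J, escFeas G X I) ∧ r = ∑ i, x i }

/-- `z^C_J(G)`: optimal value of (Tn) with the ESCs for all `I ∈ J`. -/
def zC {n : ℕ} (G : SimpleGraph (Fin n)) (J : Set (Finset (Fin n))) : ℝ :=
  sSup { r | ∃ X, X ∈ cth2 G ∧ (∀ I ∈ J, escFeas G X I) ∧ r = ∑ i, ∑ j, X i j }

/-- `z^S_J(G)`: optimal value of (Tn) with the SESCs for all `I ∈ J`. -/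
def zS {n : ℕ} (G : SimpleGraph (Fin n)) (J : Set (Finset (Fin n))) : ℝ :=
  sSup { r | ∃ X, X ∈ cth2 G ∧ (∀ I ∈ J, sescFeas G X I) ∧ r = ∑ i, ∑ j, X i j }

/-- The collection `J_k` of all vertex subsets of cardinality `k`. -/
def Jk (n k : ℕ) : Set (Finset (Fin n)) := { I | I.card = k }

/-- `α(G)` equals the (attained) supremum of `⟨J_{n×n}, X⟩` over
`X ∈ CTH²(G)` with `X ∈ STAB²(G)`. -/
theorem stmt4 {n : ℕ} (hn : 1 ≤ n) (G : SimpleGraph (Fin n)) (a : ℝ)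
    (ha : IsGreatest { r | ∃ s, IsStableVec G s ∧ r = ∑ i, s i } a) :
    IsGreatest { r | ∃ X, X ∈ cth2 G ∧ X ∈ stab2 G ∧ r = ∑ i, ∑ j, X i j } a := by
  obtain ⟨⟨s, hs, hsa⟩, hub⟩ := ha
  -- a ≥ 1
  have ha1 : (1 : ℝ) ≤ a := by
    refine hub ⟨(fun j => if j = ⟨0, hn⟩ then (1:ℝ) else 0), ⟨?_, ?_⟩, ?_⟩
    · intro i; by_cases h : i = ⟨0, hn⟩ <;> simp [h]
    · intro i j hij
      by_cases h : i = ⟨0, hn⟩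
      · have hj : j ≠ ⟨0, hn⟩ := fun hj => (G.ne_of_adj hij) (h.trans hj.symm)
        simp [hj]
      · simp [h]
    · simp
  have ha0 : (0 : ℝ) < a := lt_of_lt_of_le one_pos ha1
  -- basic facts about stable vectors
  have sq_eq : ∀ t : Fin n → ℝ, IsStableVec G t → ∀ i, t i * t i = t i := by
    intro t ht i; rcases ht.1 i with h | h <;> simp [h]
  have sum_nn : ∀ t : Fin n → ℝ, IsStableVec G t → 0 ≤ ∑ i, t i := by
    intro t ht
    exact Finset.sum_nonneg fun i _ => by rcases ht.1 i with h | h <;> simp [h]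
  have psd_vmv : ∀ t : Fin n → ℝ, (vecMulVec t t).PosSemidef := by
    intro t
    have h : vecMulVec t t = (replicateRow (Fin 1) t)ᴴ * replicateRow (Fin 1) t := by
      rw [vecMulVec_eq (Fin 1), conjTranspose_replicateRow]; simp; rfl
    rw [h]; exact posSemidef_conjTranspose_mul_self _
  -- Upper bound: stab2 ⊆ half-space
  have key : stab2 G ⊆ {M : Matrix (Fin n) (Fin n) ℝ |
      ∑ i, ∑ j, M i j ≤ a * ∑ i, M i i} := by
    apply convexHull_min
    · rintro M ⟨t, ht, rfl⟩
      have h1 : ∑ i, ∑ j, vecMulVec t t i j = (∑ i, t i) * (∑ i, t i) := by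
        simp [vecMulVec_apply, ← Finset.mul_sum, ← Finset.sum_mul]
      have h2 : ∑ i, vecMulVec t t i i = ∑ i, t i := by
        simp only [vecMulVec_apply]
        exact Finset.sum_congr rfl fun i _ => sq_eq t ht i
      have hta : ∑ i, t i ≤ a := hub ⟨t, ht, rfl⟩
      simp only [Set.mem_setOf_eq, h1, h2]
      exact mul_le_mul_of_nonneg_right hta (sum_nn t ht)
    · intro M hM N hN p q hp hq hpq
      simp only [Set.mem_setOf_eq] at *
      have e1 : ∀ f : Matrix (Fin n) (Fin n) ℝ → Fin n → Fin n → ℝ, True := fun _ => trivial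
      have h1 : ∑ i, ∑ j, (p • M + q • N) i j
          = p * (∑ i, ∑ j, M i j) + q * (∑ i, ∑ j, N i j) := by
        simp [Matrix.add_apply, Matrix.smul_apply, Finset.sum_add_distrib,
          Finset.mul_sum, smul_eq_mul]
      have h2 : ∑ i, (p • M + q • N) i i = p * (∑ i, M i i) + q * (∑ i, N i i) := by
        simp [Matrix.add_apply, Matrix.smul_apply, Finset.sum_add_distrib,
          Finset.mul_sum, smul_eq_mul]
      rw [h1, h2]
      nlinarith [mul_le_mul_of_nonneg_left hM hp, mul_le_mul_of_nonneg_left hN hq]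
  constructor
  · -- membership: X = a⁻¹ • s sᵀ
    refine ⟨a⁻¹ • vecMulVec s s, ⟨?_, ?_, ?_, ?_⟩, ?_, ?_⟩
    · unfold Matrix.IsSymm
      ext i j
      simp [vecMulVec_apply, mul_comm, Matrix.transpose_apply]
    · have : (a⁻¹ • vecMulVec s s).trace = a⁻¹ * ∑ i, s i := by
        simp only [Matrix.trace, Matrix.diag, Matrix.smul_apply, vecMulVec_apply,
          smul_eq_mul, ← Finset.mul_sum]
        congr 1
        exact Finset.sum_congr rfl fun i _ => sq_eq s hs i
      rw [this, ← hsa, inv_mul_cancel₀ (ne_of_gt ha0)]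
    · intro i j hij
      simp [Matrix.smul_apply, vecMulVec_apply, hs.2 i j hij]
    · have hrw : a⁻¹ • vecMulVec s s
          = vecMulVec (Real.sqrt a⁻¹ • s) (Real.sqrt a⁻¹ • s) := by
        ext i j
        simp only [Matrix.smul_apply, vecMulVec_apply, Pi.smul_apply, smul_eq_mul]
        rw [show Real.sqrt a⁻¹ * s i * (Real.sqrt a⁻¹ * s j)
            = (Real.sqrt a⁻¹ * Real.sqrt a⁻¹) * (s i * s j) by ring,
          Real.mul_self_sqrt (by positivity)]
      rw [hrw]; exact psd_vmv _
    · -- stab2 membership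
      have h0 : (0 : Matrix (Fin n) (Fin n) ℝ) ∈
          {M : Matrix (Fin n) (Fin n) ℝ | ∃ t, IsStableVec G t ∧ M = vecMulVec t t} := by
        refine ⟨0, ⟨fun i => Or.inl rfl, fun i j _ => by simp⟩, ?_⟩
        ext i j; simp [vecMulVec_apply]
      have hsM : vecMulVec s s ∈
          {M : Matrix (Fin n) (Fin n) ℝ | ∃ t, IsStableVec G t ∧ M = vecMulVec t t} :=
        ⟨s, hs, rfl⟩
      have hinv0 : (0:ℝ) ≤ a⁻¹ := by positivity
      have hinv1 : (0:ℝ) ≤ 1 - a⁻¹ := by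
        have : a⁻¹ ≤ 1 := inv_le_one_of_one_le₀ ha1
        linarith
      have := (convex_convexHull ℝ _) (subset_convexHull ℝ _ hsM)
        (subset_convexHull ℝ _ h0) hinv0 hinv1 (by ring)
      simpa [stab2] using this
    · have hrow : ∀ i, ∑ j, (a⁻¹ • vecMulVec s s) i j = a⁻¹ * s i * ∑ j, s j := by
        intro i
        simp only [Matrix.smul_apply, vecMulVec_apply, smul_eq_mul]
        rw [Finset.mul_sum]
        exact Finset.sum_congr rfl fun j _ => by ring
      have h1 : ∑ i, ∑ j, (a⁻¹ • vecMulVec s s) i j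
          = a⁻¹ * ((∑ i, s i) * (∑ i, s i)) := by
        calc ∑ i, ∑ j, (a⁻¹ • vecMulVec s s) i j
            = ∑ i, a⁻¹ * s i * ∑ j, s j := Finset.sum_congr rfl fun i _ => hrow i
          _ = a⁻¹ * ((∑ i, s i) * (∑ i, s i)) := by
              rw [← Finset.sum_mul, ← Finset.mul_sum]; ring
      rw [h1, ← hsa]
      field_simp
  · -- upper bound
    rintro r ⟨X, hX, hXs, rfl⟩
    have := key hXs
    have htr : ∑ i, X i i = 1 := by
      have := hX.2.1
      simpa [Matrix.trace, Matrix.diag] using this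
    simp only [Set.mem_setOf_eq, htr, mul_one] at this
    exact this
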